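/- For Δ > 1/2, the superlacunary function s(t) = Σ_{k=1}^∞ k^{−2Δ}·exp(i·2^{2^k}·t) satisfies the lower bound: there exists C₃ > 0 such that ω[s](δ) ≥ C₃·(ln|ln δ|)^{−2Δ} for all δ ∈ (0, e^{−e}). -/

import Mathlib

set_option maxHeartbeats 1000000


open Complex Real MeasureTheory

/-- The superlacunary function `s(t) = Σ_{k=1}^∞ k^{-2Δ} exp(i 2^{2^k} t)`. -/
noncomputable def superlacFun (Δ : ℝ) (t : ℝ) : ℂ :=
  ∑' k : ℕ, (((k : ℝ) + 1) ^ (-(2 * Δ)) : ℝ) *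
    Complex.exp (Complex.I * (2 : ℂ) ^ (2 ^ (k + 1)) * (t : ℂ))

/-- Modulus of continuity of a complex-valued function on ℝ. -/
noncomputable def modCont (f : ℝ → ℂ) (δ : ℝ) : ℝ :=
  sSup {y : ℝ | ∃ t h : ℝ, |h| ≤ δ ∧ y = ‖f (t + h) - f t‖}

lemma superlac_aux_summable (Δ : ℝ) (hΔ : 1 / 2 < Δ) :
    Summable (fun k : ℕ => ((k : ℝ) + 1) ^ (-(2 * Δ))) := by
  have h : (-(2 * Δ)) < -1 := by linarith
  have h1 : Summable (fun n : ℕ => (n : ℝ) ^ (-(2 * Δ))) := Real.summable_nat_rpow.mpr h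
  have h2 := (summable_nat_add_iff 1).mpr h1
  simpa using h2

lemma superlac_aux_abs_exp (r t : ℝ) :
    ‖Complex.exp (Complex.I * (r : ℂ) * (t : ℂ))‖ = 1 := by
  rw [show (Complex.I * (r : ℂ) * (t : ℂ)) = ((r * t : ℝ) : ℂ) * Complex.I by
    push_cast; ring, Complex.norm_exp_ofReal_mul_I]

lemma superlac_aux_orth (n : ℤ) (hn : n ≠ 0) :
    (∫ t in (0:ℝ)..(2 * π), Complex.exp (Complex.I * (n : ℂ) * (t : ℂ))) = 0 := by
  have hc : (Complex.I * (n : ℂ)) ≠ 0 :=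
    mul_ne_zero Complex.I_ne_zero (Int.cast_ne_zero.mpr hn)
  have h := integral_exp_mul_complex (a := 0) (b := 2 * π) hc
  rw [show (fun t : ℝ => Complex.exp (Complex.I * (n : ℂ) * (t : ℂ))) =
      fun t : ℝ => Complex.exp ((Complex.I * (n : ℂ)) * (t : ℂ)) from rfl, h]
  rw [show (Complex.I * (n : ℂ)) * ((2 * π : ℝ) : ℂ) = (n : ℂ) * (2 * (π : ℂ) * Complex.I) by
    push_cast; ring]
  rw [Complex.exp_int_mul_two_pi_mul_I]
  simp

/-- Example 2.2, lower bound: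
`ω[s](δ) ≥ C₃ (ln |ln δ|)^{-2Δ}` for `0 < δ < e^{-e}`. -/
theorem superlacFun_modCont_lower (Δ : ℝ) (hΔ : 1 / 2 < Δ) :
    ∃ C₃ : ℝ, 0 < C₃ ∧ ∀ δ : ℝ, δ ∈ Set.Ioo (0 : ℝ) (Real.exp (-(Real.exp 1))) →
      C₃ * Real.log |Real.log δ| ^ (-(2 * Δ)) ≤ modCont (superlacFun Δ) δ := by
  refine ⟨(5 : ℝ) ^ (-(2 * Δ)), Real.rpow_pos_of_pos (by norm_num) _, ?_⟩
  rintro δ ⟨hδ0, hδ1⟩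
  -- basic logarithmic quantities
  set L : ℝ := -Real.log δ with hLdef
  have hlogδ : Real.log δ < -(Real.exp 1) := by
    have h := Real.log_lt_log hδ0 hδ1
    rwa [Real.log_exp] at h
  have hLe : Real.exp 1 < L := by simp only [hLdef]; linarith
  have he1 : (2.7182818283 : ℝ) < Real.exp 1 := Real.exp_one_gt_d9
  have hL1 : 1 < L := by linarith
  have hL0 : 0 < L := by linarith
  set lnln : ℝ := Real.log L with hlnln
  have h1lnln : 1 < lnln := by
    have := Real.log_lt_log (Real.exp_pos 1) hLe
    rwa [Real.log_exp] at this
  have hlnln0 : 0 < lnln := by linarith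
  have habs : |Real.log δ| = L := by
    rw [abs_of_neg (by linarith : Real.log δ < 0)]
  -- choice of the index k
  set k : ℕ := ⌈2 * lnln⌉₊ + 1 with hkdef
  have hkcast : (k : ℝ) = (⌈2 * lnln⌉₊ : ℝ) + 1 := by exact_mod_cast rfl
  have hk_ub : (k : ℝ) + 1 ≤ 5 * lnln := by
    have h := Nat.ceil_lt_add_one (by positivity : (0:ℝ) ≤ 2 * lnln)
    rw [hkcast]; linarith
  have hk_lb : 2 * lnln + 2 ≤ (k : ℝ) + 1 := by
    have h := Nat.le_ceil (2 * lnln)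
    rw [hkcast]; linarith
  -- the frequency N = 2^(2^(k+1))
  set N : ℕ := 2 ^ (2 ^ (k + 1)) with hNdef
  have hN0 : (0 : ℝ) < (N : ℝ) := by positivity
  have hlog2 : (0.6931471803 : ℝ) < Real.log 2 := Real.log_two_gt_d9
  have hδexp : δ = Real.exp (-L) := by
    rw [hLdef, neg_neg, Real.exp_log hδ0]
  -- `2^(k+1) ≥ 4 L`
  have hpow1 : 4 * L ≤ (2 : ℝ) ^ (k + 1) := by
    have hexp : (2 : ℝ) ^ (k + 1) = Real.exp (((k : ℝ) + 1) * Real.log 2) := by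
      rw [show ((k : ℝ) + 1) = ((k + 1 : ℕ) : ℝ) by push_cast; ring,
        Real.exp_nat_mul, Real.exp_log (by norm_num : (0:ℝ) < 2)]
    rw [hexp]
    have h4L : 4 * L = Real.exp (Real.log (4 * L)) := (Real.exp_log (by linarith)).symm
    rw [h4L]
    apply Real.exp_le_exp.mpr
    have hlog4L : Real.log (4 * L) = Real.log 4 + lnln :=
      Real.log_mul (by norm_num) (by linarith)
    have hlog4 : Real.log 4 = 2 * Real.log 2 := by
      rw [show (4 : ℝ) = 2 ^ 2 by norm_num, Real.log_pow]; push_cast; ring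
    have hge : (2 * lnln + 2) * Real.log 2 ≤ ((k : ℝ) + 1) * Real.log 2 := by
      apply mul_le_mul_of_nonneg_right hk_lb (by linarith)
    nlinarith
  -- `exp (2 L) ≤ N`
  have hN2L : Real.exp (2 * L) ≤ (N : ℝ) := by
    have hNcast : (N : ℝ) = Real.exp (((2 ^ (k + 1) : ℕ) : ℝ) * Real.log 2) := by
      rw [Real.exp_nat_mul, Real.exp_log (by norm_num : (0:ℝ) < 2), hNdef]
      push_cast; ring
    rw [hNcast]
    apply Real.exp_le_exp.mpr
    have hcast : ((2 ^ (k + 1) : ℕ) : ℝ) = (2 : ℝ) ^ (k + 1) := by push_cast; ring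
    rw [hcast]
    nlinarith
  -- `π / N ≤ δ`
  have hπN : π ≤ (N : ℝ) * δ := by
    have h1 : Real.exp (2 * L) * δ = Real.exp L := by
      rw [hδexp, ← Real.exp_add]; ring_nf
    have h2 : Real.exp 2 ≤ Real.exp L := Real.exp_le_exp.mpr (by linarith)
    have h3 : Real.exp 2 = Real.exp 1 * Real.exp 1 := by
      rw [← Real.exp_add]; norm_num
    have hπ : π < 3.15 := Real.pi_lt_d2
    have h4 : π ≤ Real.exp L := by nlinarith
    calc π ≤ Real.exp L := h4
      _ = Real.exp (2 * L) * δ := h1.symm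
      _ ≤ (N : ℝ) * δ := by nlinarith [hδ0]
  have hNδ : π / (N : ℝ) ≤ δ := by
    rw [div_le_iff₀ hN0]; linarith [hπN]
  -- the coefficients and terms
  set a : ℕ → ℝ := fun j => ((j : ℝ) + 1) ^ (-(2 * Δ)) with hadef
  have ha_pos : ∀ j, 0 < a j := fun j => Real.rpow_pos_of_pos (by positivity) _
  have hsum : Summable a := superlac_aux_summable Δ hΔ
  set ν : ℕ → ℕ := fun j => 2 ^ (2 ^ (j + 1)) with hνdef
  have hν_mono : StrictMono ν := fun i j hij => by
    apply Nat.pow_lt_pow_right (by norm_num)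
    exact Nat.pow_lt_pow_right (by norm_num) (by omega)
  set f : ℕ → ℝ → ℂ := fun j t => (a j : ℂ) * Complex.exp (Complex.I * ((ν j : ℕ) : ℂ) * (t : ℂ))
    with hfdef
  have hs : ∀ t : ℝ, superlacFun Δ t = ∑' j, f j t := by
    intro t
    unfold superlacFun
    apply tsum_congr
    intro j
    have : ((2 : ℂ) ^ (2 ^ (j + 1))) = ((ν j : ℕ) : ℂ) := by
      rw [hνdef]; push_cast; ring
    rw [this]
  have hnorm_f : ∀ j t, ‖f j t‖ = a j := by
    intro j t
    rw [hfdef]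
    simp only [norm_mul]
    rw [show ((ν j : ℕ) : ℂ) = (((ν j : ℕ) : ℝ) : ℂ) by push_cast; ring,
      superlac_aux_abs_exp]
    simp [abs_of_pos (ha_pos j)]
  have hsummable_f : ∀ t, Summable (fun j => f j t) := by
    intro t
    apply Summable.of_norm
    have : (fun j => ‖f j t‖) = a := by
      funext j; rw [hnorm_f]
    rw [this]; exact hsum
  -- the set defining the modulus of continuity
  set S : Set ℝ := {y : ℝ | ∃ t h : ℝ, |h| ≤ δ ∧
    y = ‖superlacFun Δ (t + h) - superlacFun Δ t‖} with hSdef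
  have hSne : S.Nonempty := ⟨0, 0, 0, by simpa using le_of_lt hδ0, by simp⟩
  have hbound : ∀ u : ℝ, ‖superlacFun Δ u‖ ≤ ∑' j, a j := by
    intro u
    rw [hs u]
    have h1 : Summable (fun j => ‖f j u‖) := by
      have : (fun j => ‖f j u‖) = a := by
        funext j; rw [hnorm_f]
      rw [this]; exact hsum
    calc ‖∑' j, f j u‖ ≤ ∑' j, ‖f j u‖ := norm_tsum_le_tsum_norm h1
      _ = ∑' j, a j := by
          apply tsum_congr; intro j; rw [hnorm_f]
  have hbdd : BddAbove S := by
    refine ⟨2 * ∑' j, a j, ?_⟩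
    rintro y ⟨t, h', _, rfl⟩
    calc ‖superlacFun Δ (t + h') - superlacFun Δ t‖
        ≤ ‖superlacFun Δ (t + h')‖ + ‖superlacFun Δ t‖ := by
          exact norm_sub_le _ _
      _ ≤ 2 * ∑' j, a j := by
          have := hbound (t + h'); have := hbound t; linarith [hbound (t + h'), hbound t]
  -- the displacement h₀
  set h0 : ℝ := π / (N : ℝ) with hh0def
  have hh0pos : 0 < h0 := div_pos Real.pi_pos hN0
  have hh0le : |h0| ≤ δ := by rw [abs_of_pos hh0pos]; exact hNδ
  have hmem : ∀ t : ℝ, ‖superlacFun Δ (t + h0) - superlacFun Δ t‖ ≤ sSup S :=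
    fun t => le_csSup hbdd ⟨t, h0, hh0le, rfl⟩
  have hSup0 : 0 ≤ sSup S := le_trans (by positivity) (hmem 0)
  -- `exp (I ν_k h0) = -1`
  have hνk : ((ν k : ℕ) : ℝ) = (N : ℝ) := by rw [hνdef, hNdef]
  have hexp_h0 : Complex.exp (Complex.I * ((ν k : ℕ) : ℂ) * (h0 : ℂ)) = -1 := by
    have harg : Complex.I * ((ν k : ℕ) : ℂ) * (h0 : ℂ) = (π : ℂ) * Complex.I := by
      rw [hh0def]
      have hN0' : ((N : ℕ) : ℂ) ≠ 0 := by
        exact_mod_cast (ne_of_gt (by exact_mod_cast hN0 : (0:ℝ) < (N:ℝ)))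
      have : ((π / (N : ℝ) : ℝ) : ℂ) = (π : ℂ) / ((N : ℕ) : ℂ) := by push_cast; ring
      rw [this, show ((ν k : ℕ) : ℂ) = ((N : ℕ) : ℂ) by rw [hνdef, hNdef]]
      field_simp
    rw [harg, Complex.exp_pi_mul_I]
  -- the Fourier coefficients of the increment
  set c : ℕ → ℂ := fun j =>
    (a j : ℂ) * (Complex.exp (Complex.I * ((ν j : ℕ) : ℂ) * (h0 : ℂ)) - 1) with hcdef
  have hck : ‖c k‖ = 2 * a k := by
    rw [hcdef]
    simp only [norm_mul]
    rw [hexp_h0]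
    have : ((-1 : ℂ) - 1) = -2 := by ring
    rw [this]
    simp [abs_of_pos (ha_pos k)]
    ring
  -- pointwise expansion of the increment times the character
  have hg : ∀ t : ℝ,
      (superlacFun Δ (t + h0) - superlacFun Δ t) *
        Complex.exp (-(Complex.I * ((ν k : ℕ) : ℂ) * (t : ℂ))) =
      ∑' j, c j * Complex.exp (Complex.I * (((ν j : ℕ) : ℂ) - ((ν k : ℕ) : ℂ)) * (t : ℂ)) := by
    intro t
    rw [hs, hs,
      ← ((hsummable_f (t + h0)).hasSum.sub (hsummable_f t).hasSum).tsum_eq,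
      ← tsum_mul_right]
    apply tsum_congr
    intro j
    have e1 : Complex.exp (Complex.I * ((ν j : ℕ) : ℂ) * (((t + h0 : ℝ)) : ℂ)) =
        Complex.exp (Complex.I * ((ν j : ℕ) : ℂ) * (t : ℂ)) *
        Complex.exp (Complex.I * ((ν j : ℕ) : ℂ) * (h0 : ℂ)) := by
      rw [← Complex.exp_add]; congr 1; push_cast; ring
    have e2 : Complex.exp (Complex.I * (((ν j : ℕ) : ℂ) - ((ν k : ℕ) : ℂ)) * (t : ℂ)) =
        Complex.exp (Complex.I * ((ν j : ℕ) : ℂ) * (t : ℂ)) *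
        Complex.exp (-(Complex.I * ((ν k : ℕ) : ℂ) * (t : ℂ))) := by
      rw [← Complex.exp_add]; congr 1; ring
    rw [hfdef]
    simp only []
    rw [e1, hcdef]
    simp only []
    rw [e2]
    ring
  -- the integrand family
  set F : ℕ → ℝ → ℂ := fun j t =>
    c j * Complex.exp (Complex.I * (((ν j : ℕ) : ℂ) - ((ν k : ℕ) : ℂ)) * (t : ℂ)) with hFdef
  set μ : Measure ℝ := volume.restrict (Set.Ioc (0:ℝ) (2 * π)) with hμdef
  have hμfin : μ (Set.univ) < ⊤ := by
    rw [hμdef, Measure.restrict_apply MeasurableSet.univ, Set.univ_inter, Real.volume_Ioc, sub_zero]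
    exact ENNReal.ofReal_lt_top
  have hcont : ∀ j, Continuous (F j) := by
    intro j
    apply Continuous.mul continuous_const
    exact Complex.continuous_exp.comp (Continuous.mul continuous_const Complex.continuous_ofReal)
  have hF_int : ∀ j, Integrable (F j) μ := by
    intro j
    rw [hμdef]
    exact (hcont j).integrableOn_Ioc
  have hnormF : ∀ j t, ‖F j t‖ = ‖c j‖ := by
    intro j t
    rw [hFdef]
    simp only [norm_mul]
    have : (((ν j : ℕ) : ℂ) - ((ν k : ℕ) : ℂ)) = ((((ν j : ℕ) : ℝ) - ((ν k : ℕ) : ℝ) : ℝ) : ℂ) := by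
      push_cast; ring
    rw [this, superlac_aux_abs_exp, mul_one]
  have hcj_le : ∀ j, ‖c j‖ ≤ 2 * a j := by
    intro j
    rw [hcdef]
    simp only [norm_mul]
    calc ‖(a j : ℂ)‖ *
        ‖Complex.exp (Complex.I * ((ν j : ℕ) : ℂ) * (h0 : ℂ)) - 1‖
        ≤ ‖(a j : ℂ)‖ * 2 := by
          apply mul_le_mul_of_nonneg_left _ (norm_nonneg _)
          calc ‖Complex.exp (Complex.I * ((ν j : ℕ) : ℂ) * (h0 : ℂ)) - 1‖
              ≤ ‖Complex.exp (Complex.I * ((ν j : ℕ) : ℂ) * (h0 : ℂ))‖ +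
                ‖(1:ℂ)‖ := norm_sub_le _ _
            _ ≤ 2 := by
                rw [show ((ν j : ℕ) : ℂ) = (((ν j : ℕ) : ℝ) : ℂ) by push_cast; ring,
                  superlac_aux_abs_exp]
                simp; norm_num
      _ = 2 * a j := by
          rw [Complex.norm_real, Real.norm_eq_abs, abs_of_pos (ha_pos j)]; ring
  have hF_norm_int : ∀ j, (∫ t, ‖F j t‖ ∂μ) = ‖c j‖ * (2 * π) := by
    intro j
    have : (fun t => ‖F j t‖) = fun _ => ‖c j‖ := by
      funext t; exact hnormF j t
    rw [this, integral_const]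
    rw [hμdef, measureReal_def, Measure.restrict_apply MeasurableSet.univ, Set.univ_inter, Real.volume_Ioc, sub_zero]
    rw [ENNReal.toReal_ofReal Real.two_pi_pos.le, smul_eq_mul]
    ring
  have hF_sum : Summable (fun j => ∫ t, ‖F j t‖ ∂μ) := by
    refine Summable.of_nonneg_of_le (f := fun j => a j * (4 * π))
      (fun j => by rw [hF_norm_int j]; positivity) (fun j => ?_) (hsum.mul_right (4 * π))
    rw [hF_norm_int j]
    calc ‖c j‖ * (2 * π) ≤ (2 * a j) * (2 * π) :=
          mul_le_mul_of_nonneg_right (hcj_le j) (by positivity)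
      _ = a j * (4 * π) := by ring
  -- the orthogonality computation of each integral
  have hF_integral : ∀ j, (∫ t, F j t ∂μ) = if j = k then ((2 * π : ℝ) : ℂ) * c k else 0 := by
    intro j
    by_cases hjk : j = k
    · rw [hjk, if_pos rfl]
      have hFk : F k = fun _ => c k := by
        funext t
        rw [hFdef]
        simp only [sub_self, mul_zero, zero_mul, Complex.exp_zero, mul_one]
      rw [hFk, integral_const]
      rw [hμdef, measureReal_def, Measure.restrict_apply MeasurableSet.univ, Set.univ_inter, Real.volume_Ioc, sub_zero]
      rw [ENNReal.toReal_ofReal Real.two_pi_pos.le, Complex.real_smul]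
    · simp only [if_neg hjk]
      have hne : ((ν j : ℤ) - (ν k : ℤ)) ≠ 0 := by
        intro hcontra
        apply hjk
        have : (ν j : ℤ) = (ν k : ℤ) := by omega
        exact hν_mono.injective (by exact_mod_cast this)
      have horth := superlac_aux_orth ((ν j : ℤ) - (ν k : ℤ)) hne
      have hcast : (((ν j : ℤ) - (ν k : ℤ) : ℤ) : ℂ) = ((ν j : ℕ) : ℂ) - ((ν k : ℕ) : ℂ) := by
        push_cast; ring
      rw [hcast] at horth
      have hIoc : (∫ t, Complex.exp (Complex.I * (((ν j : ℕ) : ℂ) - ((ν k : ℕ) : ℂ)) * (t : ℂ)) ∂μ)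
          = 0 := by
        rw [hμdef, ← intervalIntegral.integral_of_le (by positivity : (0:ℝ) ≤ 2 * π)]
        exact horth
      rw [hFdef]
      simp only []
      rw [MeasureTheory.integral_const_mul, hIoc, mul_zero]
  -- swap sum and integral
  have hswap : ∑' j, (∫ t, F j t ∂μ) = ∫ t, (∑' j, F j t) ∂μ :=
    MeasureTheory.integral_tsum_of_summable_integral_norm hF_int hF_sum
  have hlhs : ∑' j, (∫ t, F j t ∂μ) = ((2 * π : ℝ) : ℂ) * c k := by
    rw [tsum_eq_single k]
    · rw [hF_integral k, if_pos rfl]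
    · intro j hj; rw [hF_integral j, if_neg hj]
  -- bound the integral of the increment by the sup
  have hrhs_bound : ‖∫ t, (∑' j, F j t) ∂μ‖ ≤ sSup S * (2 * π) := by
    have heq : ∀ t : ℝ, (∑' j, F j t) =
        (superlacFun Δ (t + h0) - superlacFun Δ t) *
          Complex.exp (-(Complex.I * ((ν k : ℕ) : ℂ) * (t : ℂ))) := fun t => (hg t).symm
    have hscont : Continuous (superlacFun Δ) := by
      have hc1 : Continuous fun t : ℝ => ∑' j, f j t := by
        apply continuous_tsum (u := a) (fun j => ?_) hsum (fun j t => ?_)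
        · apply Continuous.mul continuous_const
          exact Complex.continuous_exp.comp
            (Continuous.mul continuous_const Complex.continuous_ofReal)
        · rw [hnorm_f]
      have heq2 : superlacFun Δ = fun t : ℝ => ∑' j, f j t := funext hs
      rw [heq2]; exact hc1
    have hmeas : AEStronglyMeasurable (fun t => ∑' j, F j t) μ := by
      have heq3 : (fun t => ∑' j, F j t) =
          (fun t => (superlacFun Δ (t + h0) - superlacFun Δ t) *
            Complex.exp (-(Complex.I * ((ν k : ℕ) : ℂ) * (t : ℂ)))) := funext heq
      rw [heq3]
      apply Continuous.aestronglyMeasurable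
      apply Continuous.mul
      · exact ((hscont.comp (continuous_id.add continuous_const)).sub hscont)
      · exact Complex.continuous_exp.comp
          ((continuous_const.mul Complex.continuous_ofReal).neg)
    have := MeasureTheory.norm_setIntegral_le_of_norm_le_const
      (μ := volume) (s := Set.Ioc (0:ℝ) (2 * π)) (C := sSup S) (f := fun t => ∑' j, F j t)
      (by rw [Real.volume_Ioc, sub_zero]; exact ENNReal.ofReal_lt_top)
      (fun t _ => ?_)
    · rw [hμdef]
      calc ‖∫ t in Set.Ioc (0:ℝ) (2*π), (∑' j, F j t)‖ ≤
          sSup S * (volume (Set.Ioc (0:ℝ) (2*π))).toReal := this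
        _ = sSup S * (2 * π) := by
            rw [Real.volume_Ioc, sub_zero, ENNReal.toReal_ofReal Real.two_pi_pos.le]
    · rw [heq t, norm_mul]
      have : ‖Complex.exp (-(Complex.I * ((ν k : ℕ) : ℂ) * (t : ℂ)))‖ = 1 := by
        rw [show (-(Complex.I * ((ν k : ℕ) : ℂ) * (t : ℂ))) =
            Complex.I * ((-(ν k : ℝ) : ℝ) : ℂ) * (t : ℂ) by push_cast; ring,
          superlac_aux_abs_exp]
      rw [this, mul_one]
      exact hmem t
  -- conclude `2 a k ≤ sSup S`
  have hkey : 2 * a k ≤ sSup S := by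
    have h1 : ‖((2 * π : ℝ) : ℂ) * c k‖ = (2 * π) * (2 * a k) := by
      rw [norm_mul, hck]
      rw [Complex.norm_real, Real.norm_eq_abs, abs_of_pos (by positivity : (0:ℝ) < 2 * π)]
    have h2 : (2 * π) * (2 * a k) ≤ sSup S * (2 * π) := by
      rw [← h1, ← hlhs, hswap]; exact hrhs_bound
    nlinarith [Real.pi_pos]
  -- final comparison of constants
  rw [habs, ← hlnln]
  have hfinal : (5 : ℝ) ^ (-(2 * Δ)) * lnln ^ (-(2 * Δ)) ≤ a k := by
    rw [← Real.mul_rpow (by norm_num) (le_of_lt hlnln0)]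
    rw [hadef]
    apply Real.rpow_le_rpow_of_nonpos (by positivity) hk_ub (by linarith)
  show (5 : ℝ) ^ (-(2 * Δ)) * lnln ^ (-(2 * Δ)) ≤ sSup S
  calc (5 : ℝ) ^ (-(2 * Δ)) * lnln ^ (-(2 * Δ)) ≤ a k := hfinal
    _ ≤ 2 * a k := by linarith [ha_pos k]
    _ ≤ sSup S := hkey
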